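/- Let D be a diagonal matrix with diagonal entries of absolute value at most 1 and let σ > 0 with σI + C, σI + S invertible. With ξ = max{‖(σI - S)(σI + S)^{-1}‖₂, ‖(σI - C)(σI + C)^{-1}‖₂} and δ = max{‖(σI + C)^{-1}‖₂, ‖(σI + S)^{-1}‖₂}, the matrix M(σ, D) = (σI + S)^{-1}(σI - C + D)(σI + C)^{-1}(σI - S + D) satisfies ‖(σI + S) M(σ, D) (σI + S)^{-1}‖₂ ≤ (ξ + δ)², and hence ρ(M(σ, D)) ≤ (ξ + δ)²; in particular ρ(M(σ, D)) < 1 whenever δ < 1 - ξ. -/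

import Mathlib

open scoped Matrix.Norms.L2Operator

lemma l2_opNorm_diagonal_le {n : ℕ} (d : Fin n → ℂ) (hd : ∀ i, ‖d i‖ ≤ 1) :
    ‖Matrix.diagonal d‖ ≤ 1 := by
  rw [Matrix.l2_opNorm_def]
  refine ContinuousLinearMap.opNorm_le_bound _ zero_le_one fun x => ?_
  rw [one_mul]
  simp only [LinearEquiv.trans_apply, LinearMap.coe_toContinuousLinearMap',
    Matrix.toEuclideanLin_apply]
  rw [EuclideanSpace.norm_eq, EuclideanSpace.norm_eq]
  refine Real.sqrt_le_sqrt (Finset.sum_le_sum fun i _ => ?_)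
  have h1 : (WithLp.toLp 2 ((Matrix.diagonal d).mulVec x.ofLp)) i
      = d i * x i := by
    simp [Matrix.mulVec_diagonal]
  rw [h1]
  have : ‖d i * x i‖ ≤ ‖x i‖ := by
    rw [norm_mul]
    calc ‖d i‖ * ‖x i‖ ≤ 1 * ‖x i‖ := by
          exact mul_le_mul_of_nonneg_right (hd i) (norm_nonneg _)
      _ = ‖x i‖ := one_mul _
  exact pow_le_pow_left₀ (norm_nonneg _) this 2

/-- For a diagonal matrix `D` with entries of modulus at most one, the smoothed CSCS
iteration matrix `M(σ, D) = (σI + S)⁻¹(σI - C + D)(σI + C)⁻¹(σI - S + D)` satisfies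
`‖(σI + S) M (σI + S)⁻¹‖₂ ≤ (ξ + δ)²`, hence `ρ(M) ≤ (ξ + δ)²`, which is `< 1`
when `δ < 1 - ξ`. -/
theorem smoothed_cscs_matrix_bound {n : ℕ} (σ : ℝ) (hσ : 0 < σ)
    (C S : Matrix (Fin n) (Fin n) ℂ) (d : Fin n → ℂ)
    (hd : ∀ i, ‖d i‖ ≤ 1)
    (hC : IsUnit ((σ : ℂ) • (1 : Matrix (Fin n) (Fin n) ℂ) + C))
    (hS : IsUnit ((σ : ℂ) • (1 : Matrix (Fin n) (Fin n) ℂ) + S))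
    (ξ δ : ℝ)
    (hξ : ξ = max ‖((σ : ℂ) • (1 : Matrix (Fin n) (Fin n) ℂ) - S) *
                    ((σ : ℂ) • (1 : Matrix (Fin n) (Fin n) ℂ) + S)⁻¹‖
               ‖((σ : ℂ) • (1 : Matrix (Fin n) (Fin n) ℂ) - C) *
                    ((σ : ℂ) • (1 : Matrix (Fin n) (Fin n) ℂ) + C)⁻¹‖)
    (hδ : δ = max ‖((σ : ℂ) • (1 : Matrix (Fin n) (Fin n) ℂ) + C)⁻¹‖
               ‖((σ : ℂ) • (1 : Matrix (Fin n) (Fin n) ℂ) + S)⁻¹‖)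
    (M : Matrix (Fin n) (Fin n) ℂ)
    (hM : M = ((σ : ℂ) • (1 : Matrix (Fin n) (Fin n) ℂ) + S)⁻¹ *
        ((σ : ℂ) • (1 : Matrix (Fin n) (Fin n) ℂ) - C + Matrix.diagonal d) *
        ((σ : ℂ) • (1 : Matrix (Fin n) (Fin n) ℂ) + C)⁻¹ *
        ((σ : ℂ) • (1 : Matrix (Fin n) (Fin n) ℂ) - S + Matrix.diagonal d)) :
    ‖((σ : ℂ) • (1 : Matrix (Fin n) (Fin n) ℂ) + S) * M *
        ((σ : ℂ) • (1 : Matrix (Fin n) (Fin n) ℂ) + S)⁻¹‖ ≤ (ξ + δ) ^ 2 ∧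
    spectralRadius ℂ M ≤ ENNReal.ofReal ((ξ + δ) ^ 2) ∧
    (δ < 1 - ξ → spectralRadius ℂ M < 1) := by
  set I : Matrix (Fin n) (Fin n) ℂ := (σ : ℂ) • (1 : Matrix (Fin n) (Fin n) ℂ) with hI
  set A := I + S with hA
  set B := I + C with hB
  set D := Matrix.diagonal d with hDdef
  -- inverse facts
  have hAinv : A * A⁻¹ = 1 := Matrix.mul_nonsing_inv A ((Matrix.isUnit_iff_isUnit_det A).mp hS)
  -- conjugated matrix
  have hN : A * M * A⁻¹ = ((I - C + D) * B⁻¹) * ((I - S + D) * A⁻¹) := by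
    rw [hM]
    simp only [← mul_assoc]
    rw [hAinv, one_mul]
  -- norms nonneg
  have hξ0 : 0 ≤ ξ := hξ ▸ le_max_of_le_left (norm_nonneg _)
  have hδ0 : 0 ≤ δ := hδ ▸ le_max_of_le_left (norm_nonneg _)
  have hDnorm : ‖D‖ ≤ 1 := l2_opNorm_diagonal_le d hd
  -- factor bounds
  have hf1 : ‖(I - C + D) * B⁻¹‖ ≤ ξ + δ := by
    rw [add_mul]
    calc ‖(I - C) * B⁻¹ + D * B⁻¹‖ ≤ ‖(I - C) * B⁻¹‖ + ‖D * B⁻¹‖ := norm_add_le _ _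
      _ ≤ ξ + δ := by
          refine add_le_add (hξ ▸ le_max_right _ _) ?_
          calc ‖D * B⁻¹‖ ≤ ‖D‖ * ‖B⁻¹‖ := norm_mul_le _ _
            _ ≤ 1 * ‖B⁻¹‖ := mul_le_mul_of_nonneg_right hDnorm (norm_nonneg _)
            _ = ‖B⁻¹‖ := one_mul _
            _ ≤ δ := hδ ▸ le_max_left _ _
  have hf2 : ‖(I - S + D) * A⁻¹‖ ≤ ξ + δ := by
    rw [add_mul]
    calc ‖(I - S) * A⁻¹ + D * A⁻¹‖ ≤ ‖(I - S) * A⁻¹‖ + ‖D * A⁻¹‖ := norm_add_le _ _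
      _ ≤ ξ + δ := by
          refine add_le_add (hξ ▸ le_max_left _ _) ?_
          calc ‖D * A⁻¹‖ ≤ ‖D‖ * ‖A⁻¹‖ := norm_mul_le _ _
            _ ≤ 1 * ‖A⁻¹‖ := mul_le_mul_of_nonneg_right hDnorm (norm_nonneg _)
            _ = ‖A⁻¹‖ := one_mul _
            _ ≤ δ := hδ ▸ le_max_right _ _
  have hmain : ‖A * M * A⁻¹‖ ≤ (ξ + δ) ^ 2 := by
    rw [hN, sq]
    calc ‖(I - C + D) * B⁻¹ * ((I - S + D) * A⁻¹)‖
        ≤ ‖(I - C + D) * B⁻¹‖ * ‖(I - S + D) * A⁻¹‖ := norm_mul_le _ _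
      _ ≤ (ξ + δ) * (ξ + δ) :=
          mul_le_mul hf1 hf2 (norm_nonneg _) (by positivity)
  refine ⟨hmain, ?_⟩
  -- spectral radius
  have hspec : spectralRadius ℂ M ≤ ENNReal.ofReal ((ξ + δ) ^ 2) := by
    rcases Nat.eq_zero_or_pos n with hn | hn
    · subst hn
      have : spectrum ℂ M = ∅ := by
        ext z
        simp only [spectrum.mem_iff, Set.mem_empty_iff_false, iff_false, not_not]
        exact isUnit_of_subsingleton _
      rw [spectralRadius, this]
      simp
    · have : Nonempty (Fin n) := ⟨⟨0, hn⟩⟩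
      letI : NormOneClass (Matrix (Fin n) (Fin n) ℂ) := ⟨by
        rw [Matrix.cstar_norm_def, map_one]; exact norm_one⟩
      have hAinv' : A⁻¹ = (↑(hS.unit⁻¹) : Matrix (Fin n) (Fin n) ℂ) := by
        rw [Matrix.nonsing_inv_eq_ringInverse]
        exact Ring.inverse_unit hS.unit
      have hsr : spectrum ℂ (A * M * A⁻¹) = spectrum ℂ M := by
        have h := spectrum.units_conjugate (R := ℂ) (a := M) (u := hS.unit)
        rw [hS.unit_spec] at h
        rw [hAinv']
        exact h
      have : spectralRadius ℂ M = spectralRadius ℂ (A * M * A⁻¹) := by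
        rw [spectralRadius, spectralRadius, hsr]
      rw [this]
      calc spectralRadius ℂ (A * M * A⁻¹) ≤ ‖A * M * A⁻¹‖₊ :=
            spectrum.spectralRadius_le_nnnorm _
        _ ≤ ENNReal.ofReal ((ξ + δ) ^ 2) := by
            rw [← ENNReal.ofReal_coe_nnreal, coe_nnnorm]
            exact ENNReal.ofReal_le_ofReal hmain
  refine ⟨hspec, fun hlt => ?_⟩
  have h1 : (ξ + δ) ^ 2 < 1 := by nlinarith
  calc spectralRadius ℂ M ≤ ENNReal.ofReal ((ξ + δ) ^ 2) := hspec
    _ < 1 := by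
        rw [← ENNReal.ofReal_one]
        exact ENNReal.ofReal_lt_ofReal_iff_of_nonneg (by positivity) |>.mpr h1
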